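/- There exists a universal constant c > 0 such that the following holds. Let F = {x ↦ Wx : W ∈ ℝ^{r×d}, ‖W‖_F ≤ B} be the class of Frobenius-norm-bounded linear maps over inputs from {x ∈ ℝ^d : ‖x‖ ≤ 1}. Then for any fixed inputs x_1, …, x_m in the unit ball and every ε > 0, log N(F, d_m, ε) ≤ c·r²·B²/ε². -/

import Mathlib

noncomputable section

open scoped BigOperators
open Metric MeasureTheory RealInnerProductSpace
open scoped ENNReal NNReal

/-- Euclidean norm of a vector in `ℝ^r`. -/
def euclNorm {r : ℕ} (v : Fin r → ℝ) : ℝ := Real.sqrt (∑ i, (v i) ^ 2)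

/-- Frobenius norm of a matrix. -/
def frobNorm {n d : ℕ} (M : Matrix (Fin n) (Fin d) ℝ) : ℝ :=
  Real.sqrt (∑ i, ∑ j, (M i j) ^ 2)

/-- Empirical L2 distance on the fixed inputs `x` between two vector-valued functions. -/
def empDistV {X : Type*} {r m : ℕ} (x : Fin m → X)
    (f g : X → (Fin r → ℝ)) : ℝ :=
  Real.sqrt ((∑ i, (euclNorm (f (x i) - g (x i))) ^ 2) / (m : ℝ))



def diagMap (ι : Type*) [Fintype ι] (c : ι → ℝ) : EuclideanSpace ℝ ι →ₗ[ℝ] EuclideanSpace ℝ ι where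
  toFun z := WithLp.toLp 2 (fun t => c t * z t)
  map_add' a b := by ext t; simp [mul_add]
  map_smul' r a := by ext t; simp [PiLp.smul_apply, smul_eq_mul]; ring

theorem diagMap_det (ι : Type*) [Fintype ι] [DecidableEq ι] (c : ι → ℝ) :
    LinearMap.det (diagMap ι c) = ∏ t, c t := by
  classical
  let b := (EuclideanSpace.basisFun ι ℝ).toBasis
  rw [← LinearMap.det_toMatrix b]
  have h : LinearMap.toMatrix b b (diagMap ι c) = Matrix.diagonal c := by
    ext i j
    rw [LinearMap.toMatrix_apply]
    simp [diagMap, b, Matrix.diagonal, EuclideanSpace.single_apply, eq_comm]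
  rw [h, Matrix.det_diagonal]

theorem sep_card_bound {ι : Type*} [Fintype ι] [DecidableEq ι] (a : ι → ℝ) (ha : ∀ t, 0 < a t)
    {ρ : ℝ} (hρ : 0 < ρ) (C : Finset (EuclideanSpace ℝ ι))
    (hC : ∀ p ∈ C, ∑ t, (p t)^2 / (a t)^2 ≤ 1)
    (hsep : ∀ p ∈ C, ∀ q ∈ C, p ≠ q → ρ ≤ dist p q) :
    (C.card : ℝ) ≤ ∏ t, (4 * Real.sqrt ((a t)^2 + ρ^2/4) / ρ) := by
  classical
  set c : ι → ℝ := fun t => 2 * Real.sqrt ((a t)^2 + ρ^2/4) with hc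
  have hcpos : ∀ t, 0 < c t := fun t => by positivity
  have hc2a : ∀ t, (c t)^2 = 4 * ((a t)^2 + ρ^2/4) := by
    intro t
    rw [hc]
    rw [mul_pow, Real.sq_sqrt (by positivity)]
    ring
  set μ : Measure (EuclideanSpace ℝ ι) := volume with hμ
  set n := Fintype.card ι with hn
  have hfr : Module.finrank ℝ (EuclideanSpace ℝ ι) = n := by simp [hn]
  -- disjoint balls
  have hdisj : (↑C : Set (EuclideanSpace ℝ ι)).PairwiseDisjoint (fun p => ball p (ρ/2)) := by
    intro p hp q hq hpq
    apply ball_disjoint_ball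
    rw [add_halves ρ]
    exact hsep p hp q hq hpq
  -- inclusion into ellipsoid image
  have hincl : (⋃ p ∈ C, ball p (ρ/2)) ⊆ (diagMap ι c) '' (closedBall 0 1) := by
    intro y hy
    simp only [Set.mem_iUnion, exists_prop] at hy
    obtain ⟨p, hp, hyp⟩ := hy
    set u : EuclideanSpace ℝ ι := WithLp.toLp 2 (fun t => y t / c t) with hu
    have hDu : (diagMap ι c) u = y := by
      ext t
      exact mul_div_cancel₀ _ (hcpos t).ne'
    refine ⟨u, ?_, hDu⟩
    rw [mem_closedBall, dist_zero_right]
    have hnorm : ‖u‖ = Real.sqrt (∑ t, (u t)^2) := by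
      rw [EuclideanSpace.norm_eq]; simp [sq_abs]
    rw [hnorm, show (1:ℝ) = Real.sqrt 1 by simp]
    apply Real.sqrt_le_sqrt
    have hsum : ∑ t, (u t)^2 ≤ ∑ t, (2 * (p t)^2 / (c t)^2 + 2 * (y t - p t)^2 / (c t)^2) := by
      apply Finset.sum_le_sum
      intro t _
      have h1 : (u t)^2 = (y t)^2 / (c t)^2 := by rw [hu]; rw [div_pow]
      rw [h1]
      have h2 : (y t)^2 ≤ 2 * (p t)^2 + 2 * (y t - p t)^2 := by
        nlinarith [sq_nonneg (p t - (y t - p t))]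
      calc (y t)^2 / (c t)^2 ≤ (2 * (p t)^2 + 2 * (y t - p t)^2) / (c t)^2 :=
            div_le_div_of_nonneg_right h2 (by positivity) |>.trans_eq rfl
        _ = 2 * (p t)^2 / (c t)^2 + 2 * (y t - p t)^2 / (c t)^2 := by ring
    have hsplit : ∑ t, (2 * (p t)^2 / (c t)^2 + 2 * (y t - p t)^2 / (c t)^2)
        = ∑ t, 2 * (p t)^2 / (c t)^2 + ∑ t, 2 * (y t - p t)^2 / (c t)^2 := Finset.sum_add_distrib
    have hpart1 : ∑ t, 2 * (p t)^2 / (c t)^2 ≤ 1/2 := by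
      have hterm : ∀ t, 2 * (p t)^2 / (c t)^2 ≤ (1/2) * ((p t)^2 / (a t)^2) := by
        intro t
        rw [hc2a t, div_le_iff₀ (by positivity)]
        have hqa : (p t)^2/(a t)^2 * (a t)^2 = (p t)^2 := div_mul_cancel₀ _ (pow_ne_zero 2 (ha t).ne')
        have hqρ : 0 ≤ (p t)^2/(a t)^2 * ρ^2 := by positivity
        nlinarith [hqa, hqρ]
      calc ∑ t, 2 * (p t)^2 / (c t)^2 ≤ ∑ t, (1/2) * ((p t)^2 / (a t)^2) :=
            Finset.sum_le_sum (fun t _ => hterm t)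
        _ = (1/2) * ∑ t, (p t)^2 / (a t)^2 := by rw [Finset.mul_sum]
        _ ≤ 1/2 := by nlinarith [hC p hp]
    have hdist : ∑ t, (y t - p t)^2 ≤ ρ^2/4 := by
      have hd : dist y p = Real.sqrt (∑ t, (y t - p t)^2) := by
        rw [EuclideanSpace.dist_eq]; simp [Real.dist_eq, sq_abs]
      have h3 : Real.sqrt (∑ t, (y t - p t)^2) ≤ ρ/2 := hd ▸ le_of_lt (mem_ball.mp hyp)
      nlinarith [Real.sq_sqrt (show (0:ℝ) ≤ ∑ t, (y t - p t)^2 by positivity),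
        Real.sqrt_nonneg (∑ t, (y t - p t)^2)]
    have hpart2 : ∑ t, 2 * (y t - p t)^2 / (c t)^2 ≤ 1/2 := by
      have hterm : ∀ t, 2 * (y t - p t)^2 / (c t)^2 ≤ 2 * (y t - p t)^2 / ρ^2 := by
        intro t
        apply div_le_div_of_nonneg_left (by positivity) (by positivity)
        rw [hc2a t]; nlinarith [sq_nonneg (a t)]
      calc ∑ t, 2 * (y t - p t)^2 / (c t)^2 ≤ ∑ t, 2 * (y t - p t)^2 / ρ^2 :=
            Finset.sum_le_sum (fun t _ => hterm t)
        _ = (2/ρ^2) * ∑ t, (y t - p t)^2 := by rw [Finset.mul_sum]; congr 1; funext t; ring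
        _ ≤ (2/ρ^2) * (ρ^2/4) := by
            apply mul_le_mul_of_nonneg_left hdist (by positivity)
        _ = 1/2 := by
            have hρ2 : ρ^2 ≠ 0 := by positivity
            field_simp
            ring
    linarith [hsplit ▸ hsum]
  -- measure computation
  have hmeas : ((C.card : ℝ≥0∞) * μ (ball 0 (ρ/2)) ≤ ENNReal.ofReal (∏ t, c t) * μ (ball 0 1)) := by
    have h1 : μ (⋃ p ∈ C, ball p (ρ/2)) = ∑ p ∈ C, μ (ball p (ρ/2)) :=
      measure_biUnion_finset hdisj (fun _ _ => measurableSet_ball)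
    have h2 : ∀ p ∈ C, μ (ball p (ρ/2)) = μ (ball 0 (ρ/2)) := fun p _ =>
      Measure.addHaar_ball_center μ p (ρ/2)
    have h3 : μ (⋃ p ∈ C, ball p (ρ/2)) = (C.card : ℝ≥0∞) * μ (ball 0 (ρ/2)) := by
      rw [h1, Finset.sum_congr rfl h2, Finset.sum_const, nsmul_eq_mul]
    have h4 : μ ((diagMap ι c) '' (closedBall 0 1))
        = ENNReal.ofReal (∏ t, c t) * μ (closedBall 0 1) := by
      rw [Measure.addHaar_image_linearMap, diagMap_det]
      congr 2
      rw [abs_of_nonneg]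
      positivity
    have h5 : μ (closedBall (0 : EuclideanSpace ℝ ι) 1) = ENNReal.ofReal ((1:ℝ)^n) * μ (ball 0 1) := by
      rw [Measure.addHaar_closedBall μ 0 zero_le_one, hfr]
    rw [← h3]
    calc μ (⋃ p ∈ C, ball p (ρ/2)) ≤ μ ((diagMap ι c) '' (closedBall 0 1)) := measure_mono hincl
      _ = ENNReal.ofReal (∏ t, c t) * μ (ball 0 1) := by rw [h4, h5]; simp
  have hball : μ (ball (0 : EuclideanSpace ℝ ι) (ρ/2))
      = ENNReal.ofReal ((ρ/2)^n) * μ (ball 0 1) := by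
    rw [Measure.addHaar_ball_of_pos μ 0 (by positivity), hfr]
  have hpos : 0 < μ (ball (0 : EuclideanSpace ℝ ι) 1) := measure_ball_pos μ 0 one_pos
  have hfin : μ (ball (0 : EuclideanSpace ℝ ι) 1) ≠ ⊤ := measure_ball_lt_top.ne
  -- cancel the unit ball volume
  have hkey : ((C.card : ℝ≥0∞) * ENNReal.ofReal ((ρ/2)^n) ≤ ENNReal.ofReal (∏ t, c t)) := by
    rw [hball, ← mul_assoc] at hmeas
    exact (ENNReal.mul_le_mul_iff_left hpos.ne' hfin).mp hmeas
  -- to real numbers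
  have hreal : (C.card : ℝ) * (ρ/2)^n ≤ ∏ t, c t := by
    have h6 : ((C.card : ℝ≥0∞)) = ENNReal.ofReal ((C.card : ℝ)) := by
      simp [ENNReal.ofReal_natCast]
    rw [h6, ← ENNReal.ofReal_mul (by positivity)] at hkey
    exact (ENNReal.ofReal_le_ofReal_iff (by positivity)).mp hkey
  have hprod : ∏ t, c t = (∏ t, (c t / (ρ/2))) * (ρ/2)^n := by
    have h7 : ∀ t ∈ Finset.univ, c t / (ρ/2) * (ρ/2) = c t := fun t _ =>
      div_mul_cancel₀ _ (by positivity)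
    calc ∏ t, c t = ∏ t, (c t / (ρ/2) * (ρ/2)) := by
          exact (Finset.prod_congr rfl h7).symm
      _ = (∏ t, (c t / (ρ/2))) * ∏ _x : ι, (ρ/2) := Finset.prod_mul_distrib
      _ = (∏ t, (c t / (ρ/2))) * (ρ/2)^n := by
          rw [Finset.prod_const, Finset.card_univ]
  have hfinal : (C.card : ℝ) ≤ ∏ t, (c t / (ρ/2)) := by
    rw [hprod] at hreal
    exact le_of_mul_le_mul_right hreal (by positivity)
  calc (C.card : ℝ) ≤ ∏ t, (c t / (ρ/2)) := hfinal
    _ = ∏ t, (4 * Real.sqrt ((a t)^2 + ρ^2/4) / ρ) := by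
      apply Finset.prod_congr rfl
      intro t _
      rw [hc]
      field_simp
      ring
theorem ellipsoid_cover {ι : Type*} [Fintype ι] [DecidableEq ι] (a : ι → ℝ) (ha : ∀ t, 0 < a t)
    {ρ : ℝ} (hρ : 0 < ρ) :
    ∃ C : Finset (EuclideanSpace ℝ ι),
      (∀ z : EuclideanSpace ℝ ι, ∑ t, (z t)^2 / (a t)^2 ≤ 1 → ∃ p ∈ C, dist z p ≤ ρ) ∧
      (C.card : ℝ) ≤ ∏ t, (4 * Real.sqrt ((a t)^2 + ρ^2/4) / ρ) := by
  classical
  set N : ℝ := ∏ t, (4 * Real.sqrt ((a t)^2 + ρ^2/4) / ρ) with hN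
  set P : ℕ → Prop := fun k => ∃ C : Finset (EuclideanSpace ℝ ι),
    (∀ p ∈ C, ∑ t, (p t)^2 / (a t)^2 ≤ 1) ∧
    (∀ p ∈ C, ∀ q ∈ C, p ≠ q → ρ ≤ dist p q) ∧ C.card = k with hP
  have hP0 : P 0 := ⟨∅, by simp, by simp, rfl⟩
  have hPbound : ∀ k, P k → k ≤ Nat.floor N := by
    rintro k ⟨C, hC1, hC2, hC3⟩
    apply Nat.le_floor
    rw [← hC3]
    exact_mod_cast sep_card_bound a ha hρ C hC1 hC2
  set k₀ := Nat.findGreatest P (Nat.floor N) with hk₀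
  have hPk₀ : P k₀ := Nat.findGreatest_spec (Nat.zero_le _) hP0
  obtain ⟨C, hC1, hC2, hC3⟩ := hPk₀
  refine ⟨C, ?_, ?_⟩
  · intro z hz
    by_contra hcon
    push_neg at hcon
    have hzC : z ∉ C := by
      intro hzc
      have := hcon z hzc
      simp only [dist_self] at this
      linarith
    have hP1 : P (k₀ + 1) := by
      refine ⟨insert z C, ?_, ?_, ?_⟩
      · intro p hp
        rcases Finset.mem_insert.mp hp with h | h
        · exact h ▸ hz
        · exact hC1 p h
      · intro p hp q hq hpq
        rcases Finset.mem_insert.mp hp with h1 | h1 <;>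
          rcases Finset.mem_insert.mp hq with h2 | h2
        · exact absurd (h1.trans h2.symm) hpq
        · subst h1; exact le_of_lt (hcon q h2)
        · subst h2; rw [dist_comm]; exact le_of_lt (hcon p h1)
        · exact hC2 p h1 q h2 hpq
      · rw [Finset.card_insert_of_notMem hzC, hC3]
    exact absurd hP1 (Nat.findGreatest_is_greatest (Nat.lt_succ_self k₀) (hPbound _ hP1))
  · exact sep_card_bound a ha hρ C hC1 hC2



def covOp (X : Fin m → EuclideanSpace ℝ (Fin d)) :
    EuclideanSpace ℝ (Fin d) →ₗ[ℝ] EuclideanSpace ℝ (Fin d) where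
  toFun w := (m : ℝ)⁻¹ • ∑ i, ⟪X i, w⟫ • X i
  map_add' u v := by
    simp only [inner_add_right, add_smul, Finset.sum_add_distrib, smul_add]
  map_smul' r u := by
    simp only [inner_smul_right, RingHom.id_apply]
    rw [smul_comm]
    congr 1
    rw [Finset.smul_sum]
    apply Finset.sum_congr rfl
    intro i _
    rw [smul_smul]

theorem covOp_symm (X : Fin m → EuclideanSpace ℝ (Fin d)) :
    (covOp X).IsSymmetric := by
  intro u v
  simp only [covOp, LinearMap.coe_mk, AddHom.coe_mk]
  rw [real_inner_smul_left, real_inner_smul_right, sum_inner, inner_sum]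
  congr 1
  apply Finset.sum_congr rfl
  intro i _
  rw [real_inner_smul_left, real_inner_smul_right]
  rw [real_inner_comm (X i) u]
  ring

theorem covOp_inner (X : Fin m → EuclideanSpace ℝ (Fin d)) (w : EuclideanSpace ℝ (Fin d)) :
    ⟪covOp X w, w⟫ = (m : ℝ)⁻¹ * ∑ i, ⟪X i, w⟫^2 := by
  simp only [covOp, LinearMap.coe_mk, AddHom.coe_mk]
  rw [real_inner_smul_left, sum_inner]
  congr 1
  apply Finset.sum_congr rfl
  intro i _
  rw [real_inner_smul_left, sq]


def eigB (X : Fin m → EuclideanSpace ℝ (Fin d)) :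
    OrthonormalBasis (Fin d) ℝ (EuclideanSpace ℝ (Fin d)) :=
  (covOp_symm X).eigenvectorBasis (by simp)

def eigVal (X : Fin m → EuclideanSpace ℝ (Fin d)) : Fin d → ℝ :=
  (covOp_symm X).eigenvalues (by simp)

theorem eigB_apply (X : Fin m → EuclideanSpace ℝ (Fin d)) (l : Fin d) :
    covOp X (eigB X l) = eigVal X l • eigB X l :=
  (covOp_symm X).apply_eigenvectorBasis _ l

theorem parseval (X : Fin m → EuclideanSpace ℝ (Fin d)) (w : EuclideanSpace ℝ (Fin d)) :
    ∑ l, ⟪eigB X l, w⟫^2 = ‖w‖^2 := by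
  have h := (eigB X).sum_inner_mul_inner w w
  rw [real_inner_self_eq_norm_sq] at h
  rw [← h]
  apply Finset.sum_congr rfl
  intro l _
  rw [real_inner_comm (eigB X l) w, sq]

theorem quad_eq (X : Fin m → EuclideanSpace ℝ (Fin d)) (w : EuclideanSpace ℝ (Fin d)) :
    ⟪covOp X w, w⟫ = ∑ l, eigVal X l * ⟪eigB X l, w⟫^2 := by
  have h := (eigB X).sum_inner_mul_inner (covOp X w) w
  rw [← h]
  apply Finset.sum_congr rfl
  intro l _
  have h2 : ⟪covOp X w, eigB X l⟫ = eigVal X l * ⟪eigB X l, w⟫ := by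
    rw [covOp_symm X w (eigB X l), eigB_apply, real_inner_smul_right, real_inner_comm]
  rw [h2, sq]
  ring

theorem eigVal_eq (X : Fin m → EuclideanSpace ℝ (Fin d)) (l : Fin d) :
    eigVal X l = (m : ℝ)⁻¹ * ∑ i, ⟪X i, eigB X l⟫^2 := by
  have h1 : ⟪covOp X (eigB X l), eigB X l⟫ = eigVal X l := by
    rw [eigB_apply, real_inner_smul_left, real_inner_self_eq_norm_sq,
      (eigB X).orthonormal.1 l]
    norm_num
  rw [← h1, covOp_inner]

theorem eigVal_nonneg (X : Fin m → EuclideanSpace ℝ (Fin d)) (l : Fin d) :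
    0 ≤ eigVal X l := by
  rw [eigVal_eq]
  positivity

theorem sum_eigVal (X : Fin m → EuclideanSpace ℝ (Fin d)) :
    ∑ l, eigVal X l = (m : ℝ)⁻¹ * ∑ i, ‖X i‖^2 := by
  have h : ∀ l, eigVal X l = (m : ℝ)⁻¹ * ∑ i, ⟪X i, eigB X l⟫^2 := eigVal_eq X
  rw [Finset.sum_congr rfl (fun l _ => h l), ← Finset.mul_sum, Finset.sum_comm]
  congr 1
  apply Finset.sum_congr rfl
  intro i _
  rw [← parseval X (X i)]
  apply Finset.sum_congr rfl
  intro l _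
  rw [real_inner_comm]

theorem sum_eigVal_le_one (X : Fin m → EuclideanSpace ℝ (Fin d)) (hX : ∀ i, ‖X i‖ ≤ 1) :
    ∑ l, eigVal X l ≤ 1 := by
  rw [sum_eigVal]
  by_cases hm : m = 0
  · subst hm; simp
  · have hmpos : (0:ℝ) < m := by positivity
    have h1 : ∑ i, ‖X i‖^2 ≤ (m:ℝ) := by
      calc ∑ i, ‖X i‖^2 ≤ ∑ _i : Fin m, (1:ℝ) :=
            Finset.sum_le_sum (fun i _ => by
              have := hX i
              nlinarith [norm_nonneg (X i)])
        _ = (m:ℝ) := by simp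
    calc (m : ℝ)⁻¹ * ∑ i, ‖X i‖^2 ≤ (m : ℝ)⁻¹ * m :=
          mul_le_mul_of_nonneg_left h1 (by positivity)
      _ = 1 := inv_mul_cancel₀ hmpos.ne'

def toEuc {d : ℕ} (v : Fin d → ℝ) : EuclideanSpace ℝ (Fin d) := WithLp.toLp 2 v

@[simp] theorem toEuc_apply {d : ℕ} (v : Fin d → ℝ) (l : Fin d) : toEuc v l = v l := rfl

theorem toEuc_norm {d : ℕ} (v : Fin d → ℝ) : ‖toEuc v‖ = euclNorm v := by
  rw [EuclideanSpace.norm_eq, euclNorm]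
  simp [sq_abs]

theorem toEuc_inner {d : ℕ} (u v : Fin d → ℝ) :
    ⟪toEuc u, toEuc v⟫ = ∑ l, u l * v l := by
  simp [PiLp.inner_apply, RCLike.inner_apply, toEuc, mul_comm]

theorem mulVec_eq {r d : ℕ} (W : Matrix (Fin r) (Fin d) ℝ) (v : Fin d → ℝ) (j : Fin r) :
    W.mulVec v j = ⟪toEuc (W j), toEuc v⟫ := by
  rw [toEuc_inner]
  simp [Matrix.mulVec, dotProduct]

theorem euclNorm_sq {r : ℕ} (v : Fin r → ℝ) : (euclNorm v)^2 = ∑ i, (v i)^2 := by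
  rw [euclNorm, Real.sq_sqrt (by positivity)]

set_option maxHeartbeats 1000000 in
/-- Lemma (covering number of Frobenius-norm-bounded linear maps): over inputs of
Euclidean norm at most 1, the class `{x ↦ Wx : ‖W‖_F ≤ B}` admits, for every `ε > 0`,
an `ε`-cover in the empirical L2 metric of log-cardinality at most `c r² B² / ε²`. -/
theorem statement11 :
    ∃ c : ℝ, 0 < c ∧
      ∀ (r d m : ℕ) (B ε : ℝ) (x : Fin m → (Fin d → ℝ)),
        (∀ i, euclNorm (x i) ≤ 1) → 0 < ε →
        ∃ G : Finset ((Fin d → ℝ) → (Fin r → ℝ)),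
          (∀ W : Matrix (Fin r) (Fin d) ℝ, frobNorm W ≤ B →
            ∃ g ∈ G, empDistV x (fun v => W.mulVec v) g ≤ ε) ∧
          Real.log G.card ≤ c * (r : ℝ) ^ 2 * B ^ 2 / ε ^ 2 := by
  classical
  refine ⟨100, by norm_num, ?_⟩
  intro r d m B ε x hx hε
  by_cases hBε : B ≤ ε
  · -- trivial singleton cover
    set g0 : (Fin d → ℝ) → (Fin r → ℝ) := fun _ => fun _ => (0:ℝ) with hg0
    refine ⟨{g0}, ?_, ?_⟩
    · intro W hW
      refine ⟨g0, Finset.mem_singleton_self _, ?_⟩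
      have hB0 : 0 ≤ B := le_trans (Real.sqrt_nonneg _) hW
      have hWsum : ∑ j, ∑ l, (W j l)^2 ≤ B^2 := by
        have h1 := Real.sq_sqrt (show (0:ℝ) ≤ ∑ j, ∑ l, (W j l)^2 by positivity)
        have h2 : frobNorm W = Real.sqrt (∑ j, ∑ l, (W j l)^2) := rfl
        nlinarith [Real.sqrt_nonneg (∑ j, ∑ l, (W j l)^2)]
      rw [empDistV]
      rw [show (ε : ℝ) = Real.sqrt (ε^2) from (Real.sqrt_sq hε.le).symm]
      apply Real.sqrt_le_sqrt
      have hterm : ∀ i, (euclNorm ((fun v => W.mulVec v) (x i) - g0 (x i)))^2 ≤ B^2 := by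
        intro i
        rw [euclNorm_sq]
        have hxi : ∑ l, (x i l)^2 ≤ 1 := by
          have h1 := hx i
          rw [euclNorm] at h1
          nlinarith [Real.sq_sqrt (show (0:ℝ) ≤ ∑ l, (x i l)^2 by positivity),
            Real.sqrt_nonneg (∑ l, (x i l)^2)]
        have happ : ∀ j, ((fun v => W.mulVec v) (x i) - g0 (x i)) j = ∑ l, W j l * x i l := by
          intro j
          simp [hg0, Matrix.mulVec, dotProduct]
        have hcs : ∀ j, (∑ l, W j l * x i l)^2 ≤ (∑ l, (W j l)^2) := by
          intro j
          have h4 := abs_real_inner_le_norm (toEuc (W j)) (toEuc (x i))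
          rw [toEuc_inner, toEuc_norm, toEuc_norm] at h4
          have h5 : (∑ l, W j l * x i l)^2 ≤ (euclNorm (W j) * euclNorm (x i))^2 := by
            rw [← sq_abs]
            exact pow_le_pow_left₀ (abs_nonneg _) h4 2
          refine h5.trans ?_
          rw [mul_pow, euclNorm_sq, euclNorm_sq]
          nlinarith [Finset.sum_nonneg (fun l (_ : l ∈ Finset.univ) => sq_nonneg (W j l)), hxi,
            Finset.sum_nonneg (fun l (_ : l ∈ Finset.univ) => sq_nonneg (x i l))]
        calc ∑ j, (((fun v => W.mulVec v) (x i) - g0 (x i)) j)^2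
              = ∑ j, (∑ l, W j l * x i l)^2 := by
                exact Finset.sum_congr rfl (fun j _ => by rw [happ j])
          _ ≤ ∑ j, ∑ l, (W j l)^2 := Finset.sum_le_sum (fun j _ => hcs j)
          _ ≤ B^2 := hWsum
      rcases Nat.eq_zero_or_pos m with hm | hm
      · subst hm
        simp
        positivity
      · have hmpos : (0:ℝ) < m := by exact_mod_cast hm
        rw [div_le_iff₀ hmpos]
        calc ∑ i, (euclNorm ((fun v => W.mulVec v) (x i) - g0 (x i)))^2
              ≤ ∑ _i : Fin m, B^2 := Finset.sum_le_sum (fun i _ => hterm i)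
          _ = m * B^2 := by rw [Finset.sum_const, Finset.card_univ, Fintype.card_fin, nsmul_eq_mul]
          _ ≤ ε^2 * m := by
                nlinarith [mul_le_mul_of_nonneg_left (show B^2 ≤ ε^2 by nlinarith) hmpos.le]
    · simp only [Finset.card_singleton, Nat.cast_one, Real.log_one]
      positivity
  · push_neg at hBε
    have hB : 0 < B := hε.trans hBε
    set X : Fin m → EuclideanSpace ℝ (Fin d) := fun i => toEuc (x i) with hX
    have hXnorm : ∀ i, ‖X i‖ ≤ 1 := fun i => by rw [hX, toEuc_norm]; exact hx i
    set J : Finset (Fin d) := Finset.univ.filter (fun l => ε^2/(4*B^2) < eigVal X l) with hJ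
    have hJpos : ∀ l ∈ J, 0 < eigVal X l := by
      intro l hl
      have h1 : ε^2/(4*B^2) < eigVal X l := (Finset.mem_filter.mp hl).2
      have h2 : 0 < ε^2/(4*B^2) := by positivity
      linarith
    set aι : (Fin r × {l // l ∈ J}) → ℝ := fun t => B * Real.sqrt (eigVal X t.2.1) with haι
    have hapos : ∀ t, 0 < aι t := by
      intro t
      have := hJpos t.2.1 t.2.2
      rw [haι]
      positivity
    obtain ⟨C, hcov, hcard⟩ := ellipsoid_cover aι hapos (show (0:ℝ) < ε/2 by positivity)
    set what : EuclideanSpace ℝ (Fin r × {l // l ∈ J}) → Fin r → EuclideanSpace ℝ (Fin d) :=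
      fun p j => ∑ l : {l // l ∈ J}, (p (j, l) / Real.sqrt (eigVal X l.1)) • eigB X l.1 with hwhat
    set gfun : EuclideanSpace ℝ (Fin r × {l // l ∈ J}) → ((Fin d → ℝ) → (Fin r → ℝ)) :=
      fun p v j => ⟪what p j, toEuc v⟫ with hgfun
    have hinner_what : ∀ (p : EuclideanSpace ℝ (Fin r × {l // l ∈ J})) (j : Fin r) (l : Fin d),
        ⟪eigB X l, what p j⟫ =
          if h : l ∈ J then p (j, ⟨l, h⟩) / Real.sqrt (eigVal X l) else 0 := by
      intro p j l
      rw [hwhat]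
      rw [inner_sum]
      have horth : ∀ l' : {l // l ∈ J}, ⟪eigB X l, (p (j, l') / Real.sqrt (eigVal X l'.1)) • eigB X l'.1⟫
          = (p (j, l') / Real.sqrt (eigVal X l'.1)) * (if l = l'.1 then 1 else 0) := by
        intro l'
        rw [real_inner_smul_right]
        congr 1
        exact orthonormal_iff_ite.mp (eigB X).orthonormal l l'.1
      rw [Finset.sum_congr rfl (fun l' _ => horth l')]
      by_cases h : l ∈ J
      · rw [dif_pos h]
        rw [Finset.sum_eq_single (⟨l, h⟩ : {l // l ∈ J})]
        · simp
        · intro l' _ hne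
          have : l ≠ l'.1 := fun hc => hne (Subtype.ext hc.symm)
          rw [if_neg this, mul_zero]
        · intro habs
          exact absurd (Finset.mem_univ _) habs
      · rw [dif_neg h]
        apply Finset.sum_eq_zero
        intro l' _
        have : l ≠ l'.1 := by
          intro hc
          exact h (hc ▸ l'.2)
        rw [if_neg this, mul_zero]
    refine ⟨C.image gfun, ?_, ?_⟩
    · -- covering property
      intro W hW
      set w : Fin r → EuclideanSpace ℝ (Fin d) := fun j => toEuc (W j) with hw
      have hWsum : ∑ j, ‖w j‖^2 ≤ B^2 := by
        have h1 := Real.sq_sqrt (show (0:ℝ) ≤ ∑ j, ∑ l, (W j l)^2 by positivity)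
        have h2 : ∑ j, ‖w j‖^2 = ∑ j, ∑ l, (W j l)^2 := by
          apply Finset.sum_congr rfl
          intro j _
          rw [hw, toEuc_norm, euclNorm_sq]
        rw [h2]
        nlinarith [Real.sqrt_nonneg (∑ j, ∑ l, (W j l)^2), hW,
          show frobNorm W = Real.sqrt (∑ j, ∑ l, (W j l)^2) from rfl]
      set z : EuclideanSpace ℝ (Fin r × {l // l ∈ J}) :=
        WithLp.toLp 2 (fun t : Fin r × {l // l ∈ J} => Real.sqrt (eigVal X t.2.1) * ⟪eigB X t.2.1, w t.1⟫) with hz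
      have hsubsum : ∀ u : EuclideanSpace ℝ (Fin d),
          ∑ l' : {l // l ∈ J}, ⟪eigB X l'.1, u⟫^2 ≤ ‖u‖^2 := by
        intro u
        rw [Finset.sum_coe_sort J (fun l => ⟪eigB X l, u⟫^2)]
        rw [← parseval X u]
        apply Finset.sum_le_sum_of_subset_of_nonneg (Finset.subset_univ J)
        intro l _ _
        positivity
      have hzell : ∑ t, (z t)^2/(aι t)^2 ≤ 1 := by
        have hterm : ∀ t, (z t)^2/(aι t)^2 = ⟪eigB X t.2.1, w t.1⟫^2/B^2 := by
          intro t
          have hlam := hJpos t.2.1 t.2.2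
          rw [hz, haι]
          rw [mul_pow, mul_pow, Real.sq_sqrt hlam.le]
          rw [show eigVal X t.2.1 * ⟪eigB X t.2.1, w t.1⟫^2 = ⟪eigB X t.2.1, w t.1⟫^2 * eigVal X t.2.1 by ring,
            show B^2 * eigVal X t.2.1 = B^2 * eigVal X t.2.1 from rfl]
          rw [mul_comm (B^2) (eigVal X t.2.1)]
          rw [← div_div]
          rw [mul_div_assoc, div_self hlam.ne', mul_one]
        rw [Finset.sum_congr rfl (fun t _ => hterm t)]
        rw [Fintype.sum_prod_type]
        have hsum2 : ∀ j, ∑ l' : {l // l ∈ J}, ⟪eigB X l'.1, w j⟫^2/B^2 ≤ ‖w j‖^2/B^2 := by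
          intro j
          rw [← Finset.sum_div]
          apply div_le_div_of_nonneg_right (hsubsum (w j)) ?_ |>.trans_eq rfl
          positivity
        calc ∑ j, ∑ l' : {l // l ∈ J}, ⟪eigB X l'.1, w j⟫^2/B^2
            ≤ ∑ j, ‖w j‖^2/B^2 := Finset.sum_le_sum (fun j _ => hsum2 j)
          _ = (∑ j, ‖w j‖^2)/B^2 := by rw [Finset.sum_div]
          _ ≤ B^2/B^2 := by
              apply div_le_div_of_nonneg_right hWsum ?_ |>.trans_eq rfl
              positivity
          _ = 1 := div_self (by positivity)
      obtain ⟨p, hpC, hpz⟩ := hcov z hzell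
      refine ⟨gfun p, Finset.mem_image_of_mem _ hpC, ?_⟩
      set δ : Fin r → EuclideanSpace ℝ (Fin d) := fun j => w j - what p j with hδ
      -- the distance as a quadratic form
      have hcomp : ∀ i j, ((fun v => W.mulVec v) (x i) - gfun p (x i)) j = ⟪δ j, X i⟫ := by
        intro i j
        have h1 : ((fun v => W.mulVec v) (x i) - gfun p (x i)) j
            = W.mulVec (x i) j - gfun p (x i) j := rfl
        rw [h1, mulVec_eq, hgfun, hδ, inner_sub_left]
      have hDenom : (∑ i, (euclNorm ((fun v => W.mulVec v) (x i) - gfun p (x i)))^2) / (m:ℝ)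
          = ∑ j, ∑ l, eigVal X l * ⟪eigB X l, δ j⟫^2 := by
        have h1 : ∀ i, (euclNorm ((fun v => W.mulVec v) (x i) - gfun p (x i)))^2
            = ∑ j, ⟪X i, δ j⟫^2 := by
          intro i
          rw [euclNorm_sq]
          apply Finset.sum_congr rfl
          intro j _
          rw [hcomp i j, real_inner_comm]
        rw [Finset.sum_congr rfl (fun i _ => h1 i), Finset.sum_comm, div_eq_inv_mul,
          Finset.mul_sum]
        apply Finset.sum_congr rfl
        intro j _
        rw [← covOp_inner X (δ j), quad_eq X (δ j)]
      -- split into J part and complement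
      have hsplit : ∀ j, ∑ l, eigVal X l * ⟪eigB X l, δ j⟫^2
          = ∑ l ∈ J, eigVal X l * ⟪eigB X l, δ j⟫^2
            + ∑ l ∈ Finset.univ.filter (fun l => ¬ (ε^2/(4*B^2) < eigVal X l)),
                eigVal X l * ⟪eigB X l, δ j⟫^2 := by
        intro j
        rw [hJ]
        exact (Finset.sum_filter_add_sum_filter_not _ _ _).symm
      -- J part
      have hJid : ∀ (j : Fin r) (l' : {l // l ∈ J}),
          eigVal X l'.1 * ⟪eigB X l'.1, δ j⟫^2 = (z (j, l') - p (j, l'))^2 := by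
        intro j l'
        have hl : 0 < eigVal X l'.1 := hJpos _ l'.2
        have hsq : Real.sqrt (eigVal X l'.1) ≠ 0 := by positivity
        have hinn : ⟪eigB X l'.1, δ j⟫
            = ⟪eigB X l'.1, w j⟫ - p (j, l') / Real.sqrt (eigVal X l'.1) := by
          rw [hδ]
          rw [inner_sub_right, hinner_what p j l'.1, dif_pos l'.2, Subtype.coe_eta]
        rw [hinn]
        have halg : ⟪eigB X l'.1, w j⟫ - p (j, l') / Real.sqrt (eigVal X l'.1)
            = (Real.sqrt (eigVal X l'.1) * ⟪eigB X l'.1, w j⟫ - p (j, l'))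
              / Real.sqrt (eigVal X l'.1) := by
          field_simp
          try ring
        rw [halg, div_pow, Real.sq_sqrt hl.le, mul_comm, div_mul_cancel₀ _ hl.ne']
        try rfl
      have hpartA : ∑ j, ∑ l ∈ J, eigVal X l * ⟪eigB X l, δ j⟫^2 ≤ ε^2/4 := by
        have h1 : ∀ j, ∑ l ∈ J, eigVal X l * ⟪eigB X l, δ j⟫^2
            = ∑ l' : {l // l ∈ J}, (z (j, l') - p (j, l'))^2 := by
          intro j
          rw [← Finset.sum_coe_sort J (fun l => eigVal X l * ⟪eigB X l, δ j⟫^2)]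
          exact Finset.sum_congr rfl (fun l' _ => hJid j l')
        rw [Finset.sum_congr rfl (fun j _ => h1 j)]
        rw [show ∑ j, ∑ l' : {l // l ∈ J}, (z (j, l') - p (j, l'))^2
            = ∑ t : Fin r × {l // l ∈ J}, (z t - p t)^2 from
          (Fintype.sum_prod_type (f := fun t : Fin r × {l // l ∈ J} => (z t - p t)^2)).symm]
        have hdist : dist z p = Real.sqrt (∑ t, (z t - p t)^2) := by
          rw [EuclideanSpace.dist_eq]
          simp [Real.dist_eq, sq_abs]
        have h2 : Real.sqrt (∑ t, (z t - p t)^2) ≤ ε/2 := by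
          rw [hdist] at hpz
          exact hpz
        nlinarith [Real.sq_sqrt (show (0:ℝ) ≤ ∑ t, (z t - p t)^2 by positivity),
          Real.sqrt_nonneg (∑ t, (z t - p t)^2), hε]
      have hpartB : ∑ j, ∑ l ∈ Finset.univ.filter (fun l => ¬ (ε^2/(4*B^2) < eigVal X l)),
          eigVal X l * ⟪eigB X l, δ j⟫^2 ≤ ε^2/4 := by
        have h1 : ∀ j, ∀ l ∈ Finset.univ.filter (fun l => ¬ (ε^2/(4*B^2) < eigVal X l)),
            eigVal X l * ⟪eigB X l, δ j⟫^2 ≤ ε^2/(4*B^2) * ⟪eigB X l, w j⟫^2 := by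
          intro j l hl
          have hlJ : l ∉ J := by
            rw [hJ]
            intro hc
            exact (Finset.mem_filter.mp hl).2 (Finset.mem_filter.mp hc).2
          have hinn : ⟪eigB X l, δ j⟫ = ⟪eigB X l, w j⟫ := by
            rw [hδ]
            rw [inner_sub_right, hinner_what p j l, dif_neg hlJ, sub_zero]
          rw [hinn]
          apply mul_le_mul_of_nonneg_right ?_ (sq_nonneg _)
          have := (Finset.mem_filter.mp hl).2
          push_neg at this
          exact this
        have h2 : ∀ j, ∑ l ∈ Finset.univ.filter (fun l => ¬ (ε^2/(4*B^2) < eigVal X l)),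
            eigVal X l * ⟪eigB X l, δ j⟫^2 ≤ ε^2/(4*B^2) * ‖w j‖^2 := by
          intro j
          calc ∑ l ∈ Finset.univ.filter (fun l => ¬ (ε^2/(4*B^2) < eigVal X l)),
                eigVal X l * ⟪eigB X l, δ j⟫^2
              ≤ ∑ l ∈ Finset.univ.filter (fun l => ¬ (ε^2/(4*B^2) < eigVal X l)),
                ε^2/(4*B^2) * ⟪eigB X l, w j⟫^2 := Finset.sum_le_sum (h1 j)
            _ = ε^2/(4*B^2) * ∑ l ∈ Finset.univ.filter (fun l => ¬ (ε^2/(4*B^2) < eigVal X l)),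
                ⟪eigB X l, w j⟫^2 := by rw [Finset.mul_sum]
            _ ≤ ε^2/(4*B^2) * ‖w j‖^2 := by
                apply mul_le_mul_of_nonneg_left ?_ (by positivity)
                rw [← parseval X (w j)]
                apply Finset.sum_le_sum_of_subset_of_nonneg (Finset.filter_subset _ _)
                intro l _ _
                positivity
        calc ∑ j, ∑ l ∈ Finset.univ.filter (fun l => ¬ (ε^2/(4*B^2) < eigVal X l)),
              eigVal X l * ⟪eigB X l, δ j⟫^2
            ≤ ∑ j, ε^2/(4*B^2) * ‖w j‖^2 := Finset.sum_le_sum (fun j _ => h2 j)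
          _ = ε^2/(4*B^2) * ∑ j, ‖w j‖^2 := by rw [Finset.mul_sum]
          _ ≤ ε^2/(4*B^2) * B^2 := mul_le_mul_of_nonneg_left hWsum (by positivity)
          _ = ε^2/4 := by
              field_simp
              try ring
      -- conclude
      rw [empDistV, show (ε : ℝ) = Real.sqrt (ε^2) from (Real.sqrt_sq hε.le).symm]
      apply Real.sqrt_le_sqrt
      rw [hDenom]
      calc ∑ j, ∑ l, eigVal X l * ⟪eigB X l, δ j⟫^2
          = ∑ j, ∑ l ∈ J, eigVal X l * ⟪eigB X l, δ j⟫^2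
            + ∑ j, ∑ l ∈ Finset.univ.filter (fun l => ¬ (ε^2/(4*B^2) < eigVal X l)),
                eigVal X l * ⟪eigB X l, δ j⟫^2 := by
            rw [Finset.sum_congr rfl (fun j _ => hsplit j), Finset.sum_add_distrib]
        _ ≤ ε^2/4 + ε^2/4 := add_le_add hpartA hpartB
        _ ≤ ε^2 := by nlinarith [sq_nonneg ε]
    · -- cardinality bound
      have hCne : C.Nonempty := by
        have h0 : ∑ t, ((0 : EuclideanSpace ℝ (Fin r × {l // l ∈ J})) t)^2/(aι t)^2 ≤ 1 := by
          have e : ∀ t : Fin r × {l // l ∈ J},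
              ((0 : EuclideanSpace ℝ (Fin r × {l // l ∈ J})) t)^2/(aι t)^2 = 0 := by
            intro t
            rw [show ((0 : EuclideanSpace ℝ (Fin r × {l // l ∈ J})) t) = 0 from rfl,
              zero_pow two_ne_zero, zero_div]
          rw [Finset.sum_congr rfl (fun t _ => e t), Finset.sum_const_zero]
          norm_num
        obtain ⟨p, hp, _⟩ := hcov 0 h0
        exact ⟨p, hp⟩
      have hGpos : 0 < (C.image gfun).card := Finset.card_pos.mpr (hCne.image gfun)
      have hGle : ((C.image gfun).card : ℝ) ≤ (C.card : ℝ) := by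
        exact_mod_cast Finset.card_image_le
      set u : (Fin r × {l // l ∈ J}) → ℝ :=
        fun t => 4 * Real.sqrt ((aι t)^2 + (ε/2)^2/4) / (ε/2) with hu
      have hupos : ∀ t, 0 < u t := by
        intro t
        rw [hu]
        positivity
      have haε : ∀ t, ε/2 < aι t := by
        intro t
        have hlam : ε^2/(4*B^2) < eigVal X t.2.1 := (Finset.mem_filter.mp t.2.2).2
        have h1 : Real.sqrt (ε^2/(4*B^2)) < Real.sqrt (eigVal X t.2.1) :=
          Real.sqrt_lt_sqrt (by positivity) hlam
        have h2 : Real.sqrt (ε^2/(4*B^2)) = ε/(2*B) := by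
          rw [show ε^2/(4*B^2) = (ε/(2*B))^2 by ring]
          exact Real.sqrt_sq (by positivity)
        rw [h2] at h1
        have h3 := mul_lt_mul_of_pos_left h1 hB
        rw [haι]
        calc ε/2 = B * (ε/(2*B)) := by
              field_simp
          _ < B * Real.sqrt (eigVal X t.2.1) := h3
      have hub : ∀ t, u t ≤ 10 * aι t / ε := by
        intro t
        have ha0 := hapos t
        have h2 : Real.sqrt ((aι t)^2 + (ε/2)^2/4) ≤ (6/5) * aι t := by
          rw [show (6/5 : ℝ) * aι t = Real.sqrt (((6/5) * aι t)^2) from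
            (Real.sqrt_sq (by positivity)).symm]
          apply Real.sqrt_le_sqrt
          nlinarith [haε t, hε]
        rw [hu]
        rw [div_le_div_iff₀ (by positivity) (by positivity)]
        nlinarith [mul_le_mul_of_nonneg_right h2 hε.le, hε, ha0]
      have hlogcard : Real.log ((C.image gfun).card) ≤ ∑ t, (10 * aι t / ε) := by
        have h4 : ((C.image gfun).card : ℝ) ≤ ∏ t, u t := le_trans hGle hcard
        calc Real.log ((C.image gfun).card)
            ≤ Real.log (∏ t, u t) := Real.log_le_log (by exact_mod_cast hGpos) h4
          _ = ∑ t, Real.log (u t) := Real.log_prod (fun t _ => (hupos t).ne')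
          _ ≤ ∑ t, u t := Finset.sum_le_sum (fun t _ =>
              (Real.log_le_sub_one_of_pos (hupos t)).trans (by linarith))
          _ ≤ ∑ t, 10 * aι t / ε := Finset.sum_le_sum (fun t _ => hub t)
      have hJlam : ∑ l ∈ J, eigVal X l ≤ 1 := by
        refine le_trans ?_ (sum_eigVal_le_one X hXnorm)
        apply Finset.sum_le_sum_of_subset_of_nonneg (Finset.subset_univ J)
        intro l _ _
        exact eigVal_nonneg X l
      have hJcard : (J.card : ℝ) * (ε^2/(4*B^2)) ≤ 1 := by
        have h6 : ∀ l ∈ J, ε^2/(4*B^2) ≤ eigVal X l := fun l hl =>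
          le_of_lt (Finset.mem_filter.mp hl).2
        have h7 := Finset.card_nsmul_le_sum J _ _ h6
        rw [nsmul_eq_mul] at h7
        exact h7.trans hJlam
      have hc4 : (J.card : ℝ) ≤ 4*B^2/ε^2 := by
        have he : (J.card:ℝ) = ((J.card:ℝ) * (ε^2/(4*B^2))) * (4*B^2/ε^2) := by
          field_simp
        rw [he]
        calc ((J.card:ℝ) * (ε^2/(4*B^2))) * (4*B^2/ε^2) ≤ 1 * (4*B^2/ε^2) :=
              mul_le_mul_of_nonneg_right hJcard (by positivity)
          _ = 4*B^2/ε^2 := one_mul _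
      have hS : ∑ l ∈ J, Real.sqrt (eigVal X l) ≤ 2*B/ε := by
        have hS0 : 0 ≤ ∑ l ∈ J, Real.sqrt (eigVal X l) :=
          Finset.sum_nonneg (fun l _ => Real.sqrt_nonneg _)
        have hS2 : (∑ l ∈ J, Real.sqrt (eigVal X l))^2 ≤ (J.card : ℝ) * ∑ l ∈ J, eigVal X l := by
          have h8 := sq_sum_le_card_mul_sum_sq (s := J) (f := fun l => Real.sqrt (eigVal X l))
          rw [Finset.sum_congr rfl (fun l (_ : l ∈ J) => Real.sq_sqrt (eigVal_nonneg X l))] at h8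
          exact_mod_cast h8
        have h9 : (∑ l ∈ J, Real.sqrt (eigVal X l))^2 ≤ (2*B/ε)^2 := by
          calc (∑ l ∈ J, Real.sqrt (eigVal X l))^2
              ≤ (J.card : ℝ) * ∑ l ∈ J, eigVal X l := hS2
            _ ≤ (4*B^2/ε^2) * 1 := mul_le_mul hc4 hJlam
                (Finset.sum_nonneg (fun l _ => eigVal_nonneg X l)) (by positivity)
            _ = (2*B/ε)^2 := by
                field_simp
                ring
        nlinarith [hS0, h9, (show (0:ℝ) ≤ 2*B/ε by positivity)]
      have hsuma : ∑ t, aι t ≤ 2 * r * B^2 / ε := by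
        have h8 : ∑ t : Fin r × {l // l ∈ J}, aι t
            = (r : ℝ) * ∑ l ∈ J, (B * Real.sqrt (eigVal X l)) := by
          rw [show ∑ t : Fin r × {l // l ∈ J}, aι t
              = ∑ j : Fin r, ∑ l' : {l // l ∈ J}, aι (j, l') from
            Fintype.sum_prod_type (f := aι)]
          have h9 : ∀ j : Fin r, ∑ l' : {l // l ∈ J}, aι (j, l')
              = ∑ l ∈ J, (B * Real.sqrt (eigVal X l)) := by
            intro j
            rw [← Finset.sum_coe_sort J (fun l => B * Real.sqrt (eigVal X l))]
          rw [Finset.sum_congr rfl (fun j _ => h9 j), Finset.sum_const, Finset.card_univ,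
            Fintype.card_fin, nsmul_eq_mul]
        calc ∑ t, aι t = (r:ℝ) * ∑ l ∈ J, (B * Real.sqrt (eigVal X l)) := h8
          _ = (r:ℝ) * B * ∑ l ∈ J, Real.sqrt (eigVal X l) := by
              rw [← Finset.mul_sum, mul_assoc]
          _ ≤ (r:ℝ) * B * (2*B/ε) := mul_le_mul_of_nonneg_left hS (by positivity)
          _ = 2 * r * B^2/ε := by ring
      have hfin : ∑ t, (10 * aι t / ε) ≤ 100 * (r:ℝ)^2 * B^2 / ε^2 := by
        have h9 : ∑ t, (10 * aι t / ε) = (10/ε) * ∑ t, aι t := by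
          rw [Finset.mul_sum]
          apply Finset.sum_congr rfl
          intro t _
          ring
        rw [h9]
        have h10 : (10/ε) * (∑ t, aι t) ≤ (10/ε) * (2*r*B^2/ε) :=
          mul_le_mul_of_nonneg_left hsuma (by positivity)
        refine le_trans h10 ?_
        have hr5 : (r:ℝ) ≤ 5*(r:ℝ)^2 := by
          rcases Nat.eq_zero_or_pos r with h|h
          · subst h; norm_num
          · have : (1:ℝ) ≤ r := by exact_mod_cast h
            nlinarith
        rw [show (10/ε) * (2*(r:ℝ)*B^2/ε) = 20*(r:ℝ)*B^2/ε^2 by field_simp; ring]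
        rw [div_le_div_iff₀ (by positivity) (by positivity)]
        nlinarith [mul_le_mul_of_nonneg_right hr5
          (show (0:ℝ) ≤ B^2*ε^2 by positivity), sq_nonneg (B*ε)]
      calc Real.log ((C.image gfun).card) ≤ ∑ t, (10 * aι t / ε) := hlogcard
        _ ≤ 100 * (r:ℝ)^2 * B^2 / ε^2 := hfin
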